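/- Fix disjoint disks Δ(ζ₀;R₀) and Δ(ζ_ν;R_ν) in ℂ with |ζ_ν − ζ₀| ≥ R_ν + R₀, a radius 0 < r_ν < R_ν, and let C_ν = log[R₀⁻¹ r_ν⁻¹ (|ζ_ν−ζ₀|+R₀)(|ζ_ν−ζ₀|−r_ν)] and α_ν(z) = C_ν⁻¹ log[ (|z−ζ₀|/|z−ζ_ν|) · (|ζ_ν−ζ₀|+R₀)/R₀ ]. Then α_ν is harmonic on ℂ \ {ζ₀, ζ_ν}, nonnegative on ℂ \ (Δ(ζ₀;R₀) ∪ Δ(ζ_ν;r_ν)), α_ν ≥ 1 on ∂Δ(ζ_ν;r_ν), and α_ν ≤ B_ν/C_ν on ℂ \ (Δ(ζ₀;R₀) ∪ Δ(ζ_ν;R_ν)), where B_ν = log[R₀⁻¹ R_ν⁻¹ (|ζ_ν−ζ₀|+R₀)(|ζ_ν−ζ₀|+R_ν)]. -/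

import Mathlib

open Complex Metric

/-- A real-valued function is harmonic on a subset of `ℂ` if it is locally the real part
of a holomorphic function there. -/
def IsHarmonicOn (f : ℂ → ℝ) (s : Set ℂ) : Prop :=
  ∀ z ∈ s, ∃ U ∈ nhds z, U ⊆ s ∧ ∃ g : ℂ → ℂ, DifferentiableOn ℂ g U ∧
    ∀ w ∈ U, f w = (g w).re

/-- For disjoint disks `Δ(ζ₀;R₀)`, `Δ(ζ_ν;R_ν)` and `0 < r_ν < R_ν`, the
function `α_ν(z) = C_ν⁻¹ log[(|z−ζ₀|/|z−ζ_ν|)·(|ζ_ν−ζ₀|+R₀)/R₀]` is harmonic off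
`{ζ₀, ζ_ν}`, nonnegative off `Δ(ζ₀;R₀) ∪ Δ(ζ_ν;r_ν)`, at least `1` on `∂Δ(ζ_ν;r_ν)`,
and at most `B_ν/C_ν` off `Δ(ζ₀;R₀) ∪ Δ(ζ_ν;R_ν)`. -/
theorem stmt_14 (ζ₀ ζν : ℂ) (R₀ Rν rν : ℝ) (hR₀ : 0 < R₀) (hRν : 0 < Rν)
    (hrν : 0 < rν) (hrR : rν < Rν) (hsep : Rν + R₀ ≤ ‖ζν - ζ₀‖) :
    let Cν : ℝ := Real.log (R₀⁻¹ * rν⁻¹ * (‖ζν - ζ₀‖ + R₀) * (‖ζν - ζ₀‖ - rν))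
    let Bν : ℝ := Real.log (R₀⁻¹ * Rν⁻¹ * (‖ζν - ζ₀‖ + R₀) * (‖ζν - ζ₀‖ + Rν))
    let αν : ℂ → ℝ := fun z =>
      Cν⁻¹ * Real.log ((‖z - ζ₀‖ / ‖z - ζν‖) * ((‖ζν - ζ₀‖ + R₀) / R₀))
    IsHarmonicOn αν ({ζ₀, ζν}ᶜ) ∧
      (∀ z ∈ (ball ζ₀ R₀ ∪ ball ζν rν)ᶜ, 0 ≤ αν z) ∧
      (∀ z ∈ sphere ζν rν, 1 ≤ αν z) ∧
      (∀ z ∈ (ball ζ₀ R₀ ∪ ball ζν Rν)ᶜ, αν z ≤ Bν / Cν) := by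
  intro Cν Bν αν
  set d : ℝ := ‖ζν - ζ₀‖ with hdDef
  have hdpos : 0 < d := lt_of_lt_of_le (by linarith) hsep
  have hCpos : 0 < Cν := by
    apply Real.log_pos
    simp only [← hdDef]
    have h1 : rν < d + R₀ := by linarith
    have h2 : R₀ < d - rν := by linarith
    have h3 : rν * R₀ < (d + R₀) * (d - rν) := by nlinarith
    rw [show R₀⁻¹ * rν⁻¹ * (d + R₀) * (d - rν) = ((d + R₀) * (d - rν)) / (R₀ * rν) by
      field_simp]
    rw [lt_div_iff₀ (by positivity)]
    linarith
  -- triangle inequalities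
  have htri1 : ∀ w : ℂ, ‖w - ζν‖ ≤ ‖w - ζ₀‖ + d := by
    intro w
    calc ‖w - ζν‖ ≤ ‖w - ζ₀‖ + ‖ζ₀ - ζν‖ :=
          norm_sub_le_norm_sub_add_norm_sub w ζ₀ ζν
      _ = ‖w - ζ₀‖ + d := by rw [norm_sub_rev ζ₀ ζν]
  have htri2 : ∀ w : ℂ, d ≤ ‖w - ζν‖ + ‖w - ζ₀‖ := by
    intro w
    calc d = ‖ζν - ζ₀‖ := rfl
      _ ≤ ‖ζν - w‖ + ‖w - ζ₀‖ := norm_sub_le_norm_sub_add_norm_sub ζν w ζ₀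
      _ = ‖w - ζν‖ + ‖w - ζ₀‖ := by rw [norm_sub_rev ζν w]
  refine ⟨?_, ?_, ?_, ?_⟩
  · -- harmonicity
    intro z hz
    have hz0 : z ≠ ζ₀ := fun h => hz (by simp [h])
    have hzν : z ≠ ζν := fun h => hz (by simp [h])
    set c₀ : ℂ := (‖z - ζ₀‖ : ℂ) / (z - ζ₀) with hc₀
    set cν : ℂ := (‖z - ζν‖ : ℂ) / (z - ζν) with hcν
    have hzz0 : z - ζ₀ ≠ 0 := sub_ne_zero.mpr hz0
    have hzzν : z - ζν ≠ 0 := sub_ne_zero.mpr hzν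
    have habs0 : ‖c₀‖ = 1 := by
      simp [hc₀, map_div₀, Complex.norm_real, Real.norm_eq_abs, _root_.abs_of_nonneg (norm_nonneg _),
        div_self (norm_ne_zero_iff.mpr hzz0)]
    have habsν : ‖cν‖ = 1 := by
      simp [hcν, map_div₀, Complex.norm_real, Real.norm_eq_abs, _root_.abs_of_nonneg (norm_nonneg _),
        div_self (norm_ne_zero_iff.mpr hzzν)]
    set U : Set ℂ := (fun w => c₀ * (w - ζ₀)) ⁻¹' Complex.slitPlane ∩
        (fun w => cν * (w - ζν)) ⁻¹' Complex.slitPlane with hU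
    have hUopen : IsOpen U := by
      apply IsOpen.inter
      · exact Complex.isOpen_slitPlane.preimage (by fun_prop)
      · exact Complex.isOpen_slitPlane.preimage (by fun_prop)
    have hzU : z ∈ U := by
      constructor
      · show c₀ * (z - ζ₀) ∈ Complex.slitPlane
        rw [hc₀, div_mul_cancel₀ _ hzz0]
        simp [Complex.mem_slitPlane_iff, norm_pos_iff.mpr hzz0]
      · show cν * (z - ζν) ∈ Complex.slitPlane
        rw [hcν, div_mul_cancel₀ _ hzzν]
        simp [Complex.mem_slitPlane_iff, norm_pos_iff.mpr hzzν]
    refine ⟨U, hUopen.mem_nhds hzU, ?_, ?_⟩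
    · intro w hw
      simp only [Set.mem_compl_iff, Set.mem_insert_iff, Set.mem_singleton_iff]
      push_neg
      constructor
      · rintro rfl
        have := hw.1
        simp [Complex.mem_slitPlane_iff] at this
      · rintro rfl
        have := hw.2
        simp [Complex.mem_slitPlane_iff] at this
    · refine ⟨fun w => (Cν⁻¹ : ℂ) * (Complex.log (c₀ * (w - ζ₀)) -
        Complex.log (cν * (w - ζν)) + Complex.log (((d + R₀) / R₀ : ℝ))), ?_, ?_⟩
      · intro w hw
        apply DifferentiableAt.differentiableWithinAt
        apply DifferentiableAt.const_mul
        apply DifferentiableAt.add_const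
        apply DifferentiableAt.sub
        · exact (Complex.differentiableAt_log hw.1).comp (f := fun w => c₀ * (w - ζ₀)) w (by fun_prop)
        · exact (Complex.differentiableAt_log hw.2).comp (f := fun w => cν * (w - ζν)) w (by fun_prop)
      · intro w hw
        have hw0 : w - ζ₀ ≠ 0 := by
          intro h
          have := hw.1
          simp only [Set.mem_preimage, h, mul_zero] at this
          simp [Complex.mem_slitPlane_iff] at this
        have hwν : w - ζν ≠ 0 := by
          intro h
          have := hw.2
          simp only [Set.mem_preimage, h, mul_zero] at this
          simp [Complex.mem_slitPlane_iff] at this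
        have hA : (0:ℝ) < ‖w - ζ₀‖ := norm_pos_iff.mpr hw0
        have hB : (0:ℝ) < ‖w - ζν‖ := norm_pos_iff.mpr hwν
        have e0 : ‖c₀ * (w - ζ₀)‖ = ‖w - ζ₀‖ := by
          rw [norm_mul, habs0, one_mul]
        have eν : ‖cν * (w - ζν)‖ = ‖w - ζν‖ := by
          rw [norm_mul, habsν, one_mul]
        show Cν⁻¹ * Real.log ((‖w - ζ₀‖ / ‖w - ζν‖) * ((d + R₀) / R₀))
          = (((Cν : ℂ))⁻¹ * (Complex.log (c₀ * (w - ζ₀)) - Complex.log (cν * (w - ζν)) +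
            Complex.log (((d + R₀) / R₀ : ℝ)))).re
        rw [← Complex.ofReal_inv, Complex.re_ofReal_mul, Complex.add_re, Complex.sub_re,
          Complex.log_re, Complex.log_re, Complex.log_re, e0, eν, Complex.norm_real, Real.norm_eq_abs,
          _root_.abs_of_pos (by positivity : (0:ℝ) < (d + R₀) / R₀)]
        rw [Real.log_mul (by positivity) (by positivity), Real.log_div hA.ne' hB.ne']
  · -- nonnegativity
    intro z hz
    simp only [Set.mem_compl_iff, Set.mem_union, mem_ball, not_or, not_lt,
      Complex.dist_eq] at hz
    obtain ⟨hA, hB⟩ := hz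
    have hApos : (0:ℝ) < ‖z - ζ₀‖ := lt_of_lt_of_le hR₀ hA
    have hBpos : (0:ℝ) < ‖z - ζν‖ := lt_of_lt_of_le hrν hB
    apply mul_nonneg (inv_nonneg.mpr hCpos.le)
    apply Real.log_nonneg
    rw [show (‖z - ζ₀‖ / ‖z - ζν‖) * ((d + R₀) / R₀)
        = (‖z - ζ₀‖ * (d + R₀)) / (‖z - ζν‖ * R₀) by ring]
    rw [le_div_iff₀ (by positivity)]
    have h1 := htri1 z
    nlinarith
  · -- ≥ 1 on sphere
    intro z hz
    have hB : ‖z - ζν‖ = rν := by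
      rw [mem_sphere, Complex.dist_eq] at hz; exact hz
    have hA : d - rν ≤ ‖z - ζ₀‖ := by
      have := htri2 z; rw [hB] at this; linarith
    have hApos : (0:ℝ) < ‖z - ζ₀‖ := by
      have : rν + R₀ < d := by linarith
      linarith
    have hlog : Cν ≤ Real.log ((‖z - ζ₀‖ / ‖z - ζν‖) * ((d + R₀) / R₀)) := by
      apply Real.log_le_log
      · simp only [← hdDef]
        have h2 : (0:ℝ) < (d + R₀) * (d - rν) := by nlinarith
        rw [show R₀⁻¹ * rν⁻¹ * (d + R₀) * (d - rν) = ((d + R₀) * (d - rν)) / (R₀ * rν) by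
          field_simp]
        exact div_pos h2 (by positivity)
      · simp only [← hdDef]
        rw [hB]
        rw [show (‖z - ζ₀‖ / rν) * ((d + R₀) / R₀)
            = (‖z - ζ₀‖ * (d + R₀)) / (R₀ * rν) by ring,
          show R₀⁻¹ * rν⁻¹ * (d + R₀) * (d - rν) = ((d - rν) * (d + R₀)) / (R₀ * rν) by
            field_simp]
        gcongr
    calc (1:ℝ) = Cν⁻¹ * Cν := (inv_mul_cancel₀ hCpos.ne').symm
      _ ≤ αν z := mul_le_mul_of_nonneg_left hlog (inv_nonneg.mpr hCpos.le)
  · -- upper bound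
    intro z hz
    simp only [Set.mem_compl_iff, Set.mem_union, mem_ball, not_or, not_lt,
      Complex.dist_eq] at hz
    obtain ⟨hA, hB⟩ := hz
    have hApos : (0:ℝ) < ‖z - ζ₀‖ := lt_of_lt_of_le hR₀ hA
    have hBpos : (0:ℝ) < ‖z - ζν‖ := lt_of_lt_of_le hRν hB
    have hlog : Real.log ((‖z - ζ₀‖ / ‖z - ζν‖) * ((d + R₀) / R₀)) ≤ Bν := by
      apply Real.log_le_log (by positivity)
      simp only [← hdDef]
      rw [show (‖z - ζ₀‖ / ‖z - ζν‖) * ((d + R₀) / R₀)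
          = (‖z - ζ₀‖ * (d + R₀)) / (‖z - ζν‖ * R₀) by ring,
        show R₀⁻¹ * Rν⁻¹ * (d + R₀) * (d + Rν) = ((d + R₀) * (d + Rν)) / (R₀ * Rν) by
          field_simp]
      rw [div_le_div_iff₀ (by positivity) (by positivity)]
      have h1 : ‖z - ζ₀‖ ≤ ‖z - ζν‖ + d := by
        calc ‖z - ζ₀‖ ≤ ‖z - ζν‖ + ‖ζν - ζ₀‖ :=
              norm_sub_le_norm_sub_add_norm_sub z ζν ζ₀
          _ = _ := rfl
      have key : ‖z - ζ₀‖ * Rν ≤ (d + Rν) * ‖z - ζν‖ := by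
        nlinarith [mul_le_mul_of_nonneg_right h1 hRν.le,
          mul_le_mul_of_nonneg_left hB hdpos.le]
      nlinarith [mul_le_mul_of_nonneg_right key (by positivity : (0:ℝ) ≤ (d + R₀) * R₀)]
    rw [div_eq_inv_mul]
    exact mul_le_mul_of_nonneg_left hlog (inv_nonneg.mpr hCpos.le)
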